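/- Let X be a set, h : X → ℝ, and (f_i)_{i≥1} a sequence of maps f_i : X → X. Suppose there are integers d_i ≥ 2 and a constant c ≥ 0 such that |h(f_i(x))/d_i − h(x)| ≤ c for all i and all x ∈ X. Then for every x ∈ X, the sequence h_n(x) := h(f_n ∘ ⋯ ∘ f_1(x)) / (d_1⋯d_n) is a Cauchy sequence. -/

import Mathlib

open Filter Finset

/-- `orbitFrom f k n x = f (k+n) (⋯ (f (k+1) x))`, the composite applying `f (k+1)` first. -/
def orbitFrom {X : Type*} (f : ℕ → X → X) (k : ℕ) : ℕ → X → X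
  | 0 => fun x => x
  | n + 1 => fun x => f (k + n + 1) (orbitFrom f k n x)

/-- `prodFrom d k n = d (k+1) * ⋯ * d (k+n)`. -/
def prodFrom (d : ℕ → ℕ) (k n : ℕ) : ℕ := ∏ i ∈ Finset.range n, d (k + i + 1)

theorem stmt0 {X : Type*} (h : X → ℝ) (f : ℕ → X → X) (d : ℕ → ℕ)
    (hd : ∀ i, 2 ≤ d i) (c : ℝ) (hc : 0 ≤ c)
    (hb : ∀ i x, |h (f i x) / (d i : ℝ) - h x| ≤ c) (x : X) :
    CauchySeq (fun n => h (orbitFrom f 0 n x) / (prodFrom d 0 n : ℝ)) := by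
  have hP : ∀ n, (2:ℝ)^n ≤ (prodFrom d 0 n : ℝ) := by
    intro n
    have : (2:ℕ)^n ≤ prodFrom d 0 n := by
      calc (2:ℕ)^n = ∏ _i ∈ Finset.range n, 2 := by simp
        _ ≤ ∏ i ∈ Finset.range n, d (0 + i + 1) := by
            exact Finset.prod_le_prod (by intros; positivity) (fun i _ => hd _)
    exact_mod_cast this
  have hPpos : ∀ n, (0:ℝ) < (prodFrom d 0 n : ℝ) := fun n =>
    lt_of_lt_of_le (by positivity) (hP n)
  apply cauchySeq_of_le_geometric (1/2) c (by norm_num)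
  intro n
  have hsucc : prodFrom d 0 (n+1) = prodFrom d 0 n * d (0 + n + 1) := by
    simp [prodFrom, Finset.prod_range_succ]
  rw [Real.dist_eq, hsucc]
  set y := orbitFrom f 0 n x
  have horb : orbitFrom f 0 (n+1) x = f (0 + n + 1) y := rfl
  rw [horb]
  push_cast
  have hdpos : (0:ℝ) < (d (0 + n + 1) : ℝ) := by
    have := hd (0 + n + 1); positivity
  have key : h y / (prodFrom d 0 n : ℝ) -
      h (f (0 + n + 1) y) / ((prodFrom d 0 n : ℝ) * (d (0 + n + 1) : ℝ)) =
      (h y - h (f (0 + n + 1) y) / (d (0 + n + 1) : ℝ)) / (prodFrom d 0 n : ℝ) := by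
    field_simp
  rw [key, abs_div, abs_of_pos (hPpos n)]
  have h1 : |h y - h (f (0 + n + 1) y) / (d (0 + n + 1) : ℝ)| ≤ c := by
    rw [abs_sub_comm]; exact hb _ _
  have h2 : c / (prodFrom d 0 n : ℝ) ≤ c * (1/2)^n := by
    rw [div_le_iff₀ (hPpos n)]
    have h3 : (1:ℝ) ≤ (1/2)^n * (prodFrom d 0 n : ℝ) := by
      calc (1:ℝ) = (1/2)^n * 2^n := by rw [← mul_pow]; norm_num
        _ ≤ _ := mul_le_mul_of_nonneg_left (hP n) (by positivity)
    calc c = c * 1 := by ring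
      _ ≤ c * ((1/2)^n * (prodFrom d 0 n : ℝ)) := mul_le_mul_of_nonneg_left h3 hc
      _ = c * (1/2)^n * (prodFrom d 0 n : ℝ) := by ring
  calc |h y - h (f (0 + n + 1) y) / (d (0 + n + 1) : ℝ)| / (prodFrom d 0 n : ℝ)
      ≤ c / (prodFrom d 0 n : ℝ) := by gcongr
    _ ≤ c * (1/2)^n := h2
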